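/- arXiv:1705.07226 — 7 statements merged into one kernel-verified Lean document; each statement's English description precedes it below -/
import Mathlib

section
/- Let κ be a ranking function on Ω, A ⊆ Ω an event with κ(A) < ∞ and κ(Aᶜ) < ∞, and x ∈ ℕ∞ a rank. Then the J-conditioning κ_{A→x} is again a ranking function over events: κ_{A→x}(Ω) = 0, and for every event B, κ_{A→x}(B) equals the infimum of κ_{A→x} over the singletons contained in B. -/
/-- Rank of an event. -/
noncomputable def rnk {Ω : Type*} (κ : Ω → ℕ∞) (A : Set Ω) : ℕ∞ := ⨅ w ∈ A, κ w

/-- Conditional rank κ(B | C) = κ(B ∩ C) − κ(C). -/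
noncomputable def crank {Ω : Type*} (κ : Ω → ℕ∞) (B C : Set Ω) : ℕ∞ :=
  rnk κ (B ∩ C) - rnk κ C

/-- J-conditioning of κ by A with strength x. -/
noncomputable def jcond {Ω : Type*} (κ : Ω → ℕ∞) (A : Set Ω) (x : ℕ∞) (B : Set Ω) : ℕ∞ :=
  min (crank κ B A) (crank κ B Aᶜ + x)

lemma enat_exists_eq_iInf {ι : Sort*} [Nonempty ι] (f : ι → ℕ∞) : ∃ i, f i = ⨅ j, f j := by
  have h : ∃ i, f i = sInf (Set.range f) := by
    have : sInf (Set.range f) ∈ Set.range f := csInf_mem (Set.range_nonempty f)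
    obtain ⟨i, hi⟩ := this
    exact ⟨i, hi⟩
  simpa [iInf, sInf] using h

lemma enat_iInf_sub {ι : Sort*} (f : ι → ℕ∞) (c : ℕ∞) (hc : c ≠ ⊤) :
    (⨅ i, f i) - c = ⨅ i, (f i - c) := by
  cases isEmpty_or_nonempty ι with
  | inl h =>
    lift c to ℕ using hc
    simp [iInf_of_empty]
  | inr h =>
    obtain ⟨i, hi⟩ := enat_exists_eq_iInf f
    refine le_antisymm (le_iInf fun j => tsub_le_tsub_right (iInf_le f j) c) ?_
    rw [← hi]
    exact iInf_le _ i

lemma enat_iInf_add {ι : Sort*} (f : ι → ℕ∞) (c : ℕ∞) :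
    (⨅ i, f i) + c = ⨅ i, (f i + c) := by
  cases isEmpty_or_nonempty ι with
  | inl h => simp [iInf_of_empty]
  | inr h =>
    obtain ⟨i, hi⟩ := enat_exists_eq_iInf f
    refine le_antisymm (le_iInf fun j => add_le_add_left (iInf_le f j) c) ?_
    rw [← hi]
    exact iInf_le _ i

lemma rnk_inter_eq {Ω : Type*} (κ : Ω → ℕ∞) (B A : Set Ω) :
    rnk κ (B ∩ A) = ⨅ w ∈ B, rnk κ ({w} ∩ A) := by
  simp only [rnk, Set.mem_inter_iff, Set.mem_singleton_iff, iInf_and,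
    iInf_iInf_eq_left]

lemma crank_eq_iInf {Ω : Type*} (κ : Ω → ℕ∞) (B A : Set Ω) (hA : rnk κ A ≠ ⊤) :
    crank κ B A = ⨅ w ∈ B, crank κ {w} A := by
  simp only [crank, rnk_inter_eq κ B A]
  rw [iInf_subtype', iInf_subtype', enat_iInf_sub _ _ hA]

/-- J-conditioning is again a ranking function over events. -/
theorem jcond_is_ranking {Ω : Type*} [Fintype Ω] [Nonempty Ω]
    (κ : Ω → ℕ∞) (hκ : (⨅ w, κ w) = 0) (A : Set Ω)
    (hA : rnk κ A < ⊤) (hAc : rnk κ Aᶜ < ⊤) (x : ℕ∞) :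
    jcond κ A x Set.univ = 0 ∧
    ∀ B : Set Ω, jcond κ A x B = ⨅ w ∈ B, jcond κ A x {w} := by
  constructor
  · have h1 : crank κ Set.univ A = 0 := by
      simp [crank, Set.univ_inter, tsub_eq_zero_of_le le_rfl]
    simp [jcond, h1]
  · intro B
    have h1 := crank_eq_iInf κ B A hA.ne
    have h2 := crank_eq_iInf κ B Aᶜ hAc.ne
    rw [jcond, h1, h2, iInf_subtype', iInf_subtype', enat_iInf_add,
      ← iInf_inf_eq]
    rw [iInf_subtype']
    rfl
end

section
/- (Semantic content of Theorem 1.) Let κ be a ranking function on Ω, A ⊆ Ω an event with κ(A) < ∞ and κ(Aᶜ) < ∞, and x ∈ ℕ∞ a rank. Define the point function λ : Ω → ℕ∞ by λ(w) = min(κ_A(w), κ_{Aᶜ}(w) + x), where κ_A and κ_{Aᶜ} are the pointwise conditionalizations of κ by A and by Aᶜ. Then λ is already normalized, i.e. ⨅ w, λ(w) = 0, and its extension to events equals the J-conditioning of κ by A with strength x: for every event B, κ_{A→x}(B) = ⨅ w ∈ B, λ(w). -/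
open Classical in
/-- Pointwise conditionalization of κ on an event C. -/
noncomputable def pcond {Ω : Type*} (κ : Ω → ℕ∞) (C : Set Ω) (w : Ω) : ℕ∞ :=
  if w ∈ C then κ w - rnk κ C else ⊤

/-- A monotone, top-preserving map commutes with infima over finite sets. -/
lemma map_biInf {Ω : Type*} [Fintype Ω] (S : Set Ω) (g : Ω → ℕ∞) (φ : ℕ∞ → ℕ∞)
    (hmono : Monotone φ) (htop : φ ⊤ = ⊤) :
    ⨅ w ∈ S, φ (g w) = φ (⨅ w ∈ S, g w) := by
  rcases S.eq_empty_or_nonempty with h | h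
  · simp [h, htop]
  · obtain ⟨w0, hw0, hmin⟩ := Set.exists_min_image S g S.toFinite h
    have h1 : (⨅ w ∈ S, g w) = g w0 := by
      apply le_antisymm (iInf₂_le w0 hw0)
      exact le_iInf₂ fun w hw => hmin w hw
    have h2 : (⨅ w ∈ S, φ (g w)) = φ (g w0) := by
      apply le_antisymm (iInf₂_le w0 hw0)
      exact le_iInf₂ fun w hw => hmono (hmin w hw)
    rw [h1, h2]

/-- Restricting a bInf to the support where the function is not ⊤. -/
lemma biInf_restrict {Ω : Type*} (B C : Set Ω) (f : Ω → ℕ∞)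
    (hf : ∀ w ∉ C, f w = ⊤) :
    ⨅ w ∈ B, f w = ⨅ w ∈ B ∩ C, f w := by
  apply le_antisymm
  · exact le_iInf₂ fun w hw => iInf₂_le w hw.1
  · refine le_iInf₂ fun w hw => ?_
    by_cases hc : w ∈ C
    · exact iInf₂_le w ⟨hw, hc⟩
    · rw [hf w hc]; exact le_top

lemma crank_eq {Ω : Type*} [Fintype Ω] (κ : Ω → ℕ∞) (B C : Set Ω)
    (hC : rnk κ C ≠ ⊤) (x : ℕ∞) :
    crank κ B C + x = ⨅ w ∈ B, (pcond κ C w + x) := by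
  classical
  have h1 : ⨅ w ∈ B, (pcond κ C w + x) = ⨅ w ∈ B ∩ C, (pcond κ C w + x) := by
    apply biInf_restrict
    intro w hw
    simp [pcond, hw, top_add]
  have h2 : ⨅ w ∈ B ∩ C, (pcond κ C w + x) = ⨅ w ∈ B ∩ C, (κ w - rnk κ C + x) := by
    apply iInf_congr; intro w; apply iInf_congr; intro hw
    simp [pcond, hw.2]
  have h3 : ⨅ w ∈ B ∩ C, (κ w - rnk κ C + x) = (⨅ w ∈ B ∩ C, κ w) - rnk κ C + x := by
    apply map_biInf (B ∩ C) κ (fun a => a - rnk κ C + x)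
    · exact fun a b hab => add_le_add_left (tsub_le_tsub_right hab _) x
    · show (⊤:ℕ∞) - rnk κ C + x = ⊤
      rw [ENat.sub_eq_top_iff.mpr ⟨rfl, hC⟩, top_add]
  rw [h1, h2, h3]
  rfl

/-- the pointwise function λ(w) = min(κ_A(w), κ_{Aᶜ}(w) + x) is
normalized and its extension to events equals the J-conditioning of κ by A
with strength x. -/
theorem jcond_semantics {Ω : Type*} [Fintype Ω] [Nonempty Ω]
    (κ : Ω → ℕ∞) (hκ : (⨅ w, κ w) = 0) (A : Set Ω)
    (hA : rnk κ A < ⊤) (hAc : rnk κ Aᶜ < ⊤) (x : ℕ∞) :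
    (⨅ w, min (pcond κ A w) (pcond κ Aᶜ w + x)) = 0 ∧
    ∀ B : Set Ω, jcond κ A x B = ⨅ w ∈ B, min (pcond κ A w) (pcond κ Aᶜ w + x) := by
  have key : ∀ B : Set Ω, jcond κ A x B
      = ⨅ w ∈ B, min (pcond κ A w) (pcond κ Aᶜ w + x) := by
    intro B
    have hA' : crank κ B A = ⨅ w ∈ B, pcond κ A w := by
      have := crank_eq κ B A hA.ne 0
      simpa using this
    have hAc' : crank κ B Aᶜ + x = ⨅ w ∈ B, (pcond κ Aᶜ w + x) :=
      crank_eq κ B Aᶜ hAc.ne x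
    rw [jcond, hA', hAc']
    rw [← iInf_inf_eq]
    apply iInf_congr; intro w
    rcases Classical.em (w ∈ B) with h | h
    · simp [h]
    · simp [h]
  refine ⟨?_, key⟩
  have h := key Set.univ
  simp only [Set.mem_univ, iInf_pos, iInf_true] at h
  rw [← h]
  have : jcond κ A x Set.univ = 0 := by
    have : crank κ Set.univ A = 0 := by
      simp [crank, Set.univ_inter, tsub_self]
    simp [jcond, this]
  simpa using this
end

section
/- Let κ be a ranking function on Ω, A ⊆ Ω an event with κ(A) < ∞ and κ(Aᶜ) < ∞, and x ∈ ℕ∞ a rank. Then the L-conditioning κ_{A↑x} is again a ranking function over events: κ_{A↑x}(Ω) = 0. -/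
/-- L-conditioning of κ by A with strength x. -/
noncomputable def lcond {Ω : Type*} (κ : Ω → ℕ∞) (A : Set Ω) (x : ℕ∞) (B : Set Ω) : ℕ∞ :=
  min (rnk κ (A ∩ B) - min (rnk κ A) x) (rnk κ (Aᶜ ∩ B) + x - min (rnk κ A) x)

/-- L-conditioning is again a ranking function over events:
it assigns rank 0 to Ω. -/
theorem lcond_is_ranking {Ω : Type*} [Fintype Ω] [Nonempty Ω]
    (κ : Ω → ℕ∞) (hκ : (⨅ w, κ w) = 0) (A : Set Ω)
    (hA : rnk κ A < ⊤) (hAc : rnk κ Aᶜ < ⊤) (x : ℕ∞) :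
    lcond κ A x Set.univ = 0 := by
  have hmin : min (rnk κ A) (rnk κ Aᶜ) = 0 := by
    rw [← hκ, min_comm]
    simp only [rnk]
    rw [← iInf_union, Set.compl_union_self, iInf_univ]
  unfold lcond
  rw [Set.inter_univ, Set.inter_univ]
  rcases le_or_gt (rnk κ A) x with h | h
  · rw [min_eq_left h]
    simp [tsub_eq_zero_of_le le_rfl]
  · rw [min_eq_right h.le]
    have hAc0 : rnk κ Aᶜ = 0 := by
      rcases min_eq_iff.mp hmin with ⟨h1, _⟩ | ⟨h1, _⟩
      · exact absurd h1 (by intro e; rw [e] at h; simp at h)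
      · exact h1
    rw [hAc0, zero_add]
    have hx : x ≠ ⊤ := fun e => by rw [e] at h; exact absurd (h.trans hA) (lt_irrefl _)
    simp [tsub_eq_zero_of_le le_rfl]
end

section
/- L-conditioning is reversible: let κ be a ranking function on Ω, A ⊆ Ω an event with κ(A) < ∞ and κ(Aᶜ) < ∞, and x < ∞ a finite rank. Let κ' be the ranking function on events obtained by L-conditioning κ by A with strength x. Then L-conditioning κ' by Aᶜ with strength x recovers κ: ((κ_{A↑x})_{Aᶜ↑x})(B) = κ(B) for every event B. -/
/-- L-conditioning, applied to any ranking function over events. -/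
noncomputable def lcondE {Ω : Type*} (r : Set Ω → ℕ∞) (A : Set Ω) (x : ℕ∞) (B : Set Ω) : ℕ∞ :=
  min (r (A ∩ B) - min (r A) x) (r (Aᶜ ∩ B) + x - min (r A) x)

lemma rnk_union {Ω : Type*} (κ : Ω → ℕ∞) (S T : Set Ω) :
    rnk κ (S ∪ T) = min (rnk κ S) (rnk κ T) := by
  simp only [rnk]; rw [iInf_union]

lemma rnk_empty {Ω : Type*} (κ : Ω → ℕ∞) : rnk κ (∅ : Set Ω) = ⊤ := by simp [rnk]

lemma rnk_mono {Ω : Type*} (κ : Ω → ℕ∞) {S T : Set Ω} (h : S ⊆ T) :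
    rnk κ T ≤ rnk κ S := biInf_mono h

/-- L-conditioning is reversible:
((κ_{A↑x})_{Aᶜ↑x})(B) = κ(B) for every event B. -/
theorem lcond_reversible {Ω : Type*} [Fintype Ω] [Nonempty Ω]
    (κ : Ω → ℕ∞) (hκ : (⨅ w, κ w) = 0) (A : Set Ω)
    (hA : rnk κ A < ⊤) (hAc : rnk κ Aᶜ < ⊤) (x : ℕ∞) (hx : x < ⊤) :
    ∀ B : Set Ω, lcondE (lcondE (rnk κ) A x) Aᶜ x B = rnk κ B := by
  intro B
  set a := rnk κ A with ha
  set b := rnk κ Aᶜ with hb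
  set y := min a x with hy
  have hyx : y ≤ x := min_le_right _ _
  have hytop : y ≠ ⊤ := (lt_of_le_of_lt hyx hx).ne
  have hxtop : x ≠ ⊤ := hx.ne
  have htopy : (⊤ : ℕ∞) - y = ⊤ := by
    rw [ENat.sub_eq_top_iff]; exact ⟨rfl, hytop⟩
  have hmin0 : min a b = 0 := by
    rw [ha, hb, ← rnk_union, Set.union_compl_self]
    simpa [rnk] using hκ
  have hκ'Ac : lcondE (rnk κ) A x Aᶜ = b + x - y := by
    rw [lcondE, Set.inter_compl_self, Set.inter_self, rnk_empty, ← ha, ← hb, ← hy,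
      htopy, min_eq_right le_top]
  have hκ'AcB : lcondE (rnk κ) A x (Aᶜ ∩ B) = rnk κ (Aᶜ ∩ B) + x - y := by
    rw [lcondE, ← Set.inter_assoc, Set.inter_compl_self, Set.empty_inter,
      ← Set.inter_assoc, Set.inter_self, rnk_empty, ← ha, ← hy, htopy,
      min_eq_right le_top]
  have hκ'AB : lcondE (rnk κ) A x (A ∩ B) = rnk κ (A ∩ B) - y := by
    rw [lcondE, ← Set.inter_assoc, Set.inter_self, ← Set.inter_assoc,
      Set.compl_inter_self, Set.empty_inter, rnk_empty, ← ha, ← hy, top_add, htopy,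
      min_eq_left le_top]
  have hB : rnk κ B = min (rnk κ (A ∩ B)) (rnk κ (Aᶜ ∩ B)) := by
    rw [← rnk_union, ← Set.union_inter_distrib_right, Set.union_compl_self, Set.univ_inter]
  rw [lcondE, compl_compl, hκ'Ac, hκ'AcB, hκ'AB, hB]
  set p := rnk κ (A ∩ B) with hp
  set q := rnk κ (Aᶜ ∩ B) with hq
  have hap : a ≤ p := rnk_mono κ Set.inter_subset_left
  rcases le_total a b with hab | hab
  · -- a = 0
    have ha0 : a = 0 := by rw [← hmin0, min_eq_left hab]
    have hy0 : y = 0 := by rw [hy, ha0]; simp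
    rw [hy0]
    simp only [tsub_zero]
    rw [min_eq_right (le_add_self : x ≤ b + x)]
    rw [(ENat.addLECancellable_of_ne_top hxtop).add_tsub_cancel_right,
      (ENat.addLECancellable_of_ne_top hxtop).add_tsub_cancel_right, min_comm]
  · -- b = 0
    have hb0 : b = 0 := by rw [← hmin0, min_eq_right hab]
    rw [hb0, zero_add]
    have hxyx : x - y ≤ x := tsub_le_self
    rw [min_eq_left hxyx]
    have hxy_top : x - y ≠ ⊤ := (lt_of_le_of_lt hxyx hx).ne
    have h1 : q + x - y - (x - y) = q := by
      rw [(ENat.addLECancellable_of_ne_top hytop).add_tsub_assoc_of_le hyx]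
      exact (ENat.addLECancellable_of_ne_top hxy_top).add_tsub_cancel_right
    have h2 : p - y + x - (x - y) = p := by
      rw [(ENat.addLECancellable_of_ne_top hxy_top).add_tsub_assoc_of_le hxyx,
        ENat.sub_sub_cancel hxtop hyx,
        tsub_add_cancel_of_le (le_trans (min_le_left a x) hap)]
    rw [h1, h2, min_comm]
end

section
/- L-conditioning is commutative: let κ be a ranking function on Ω, let A, B ⊆ Ω be events with κ(A), κ(Aᶜ), κ(B), κ(Bᶜ) all finite, and let x < ∞ be a finite rank. Then L-conditioning by A with strength x followed by L-conditioning by B with strength x yields the same result as performing the two L-conditionings in the opposite order: ((κ_{A↑x})_{B↑x})(C) = ((κ_{B↑x})_{A↑x})(C) for every event C. -/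
theorem subadd' {a : ℕ∞} {b : ℕ∞} (c : ℕ∞) (hb : b ≠ ⊤) (h : b ≤ a) :
    a - b + c = a + c - b := by
  lift b to ℕ using hb
  induction a using ENat.recTopCoe with
  | top => simp
  | coe a =>
    induction c using ENat.recTopCoe with
    | top => simp
    | coe c =>
      have hba : b ≤ a := by exact_mod_cast h
      rw [← ENat.coe_sub, ← ENat.coe_add, ← ENat.coe_add, ← ENat.coe_sub]
      exact Nat.cast_inj.mpr (by omega)

theorem sub_min' (m n k : ℕ∞) : min m n - k = min (m - k) (n - k) := by
  rcases le_total m n with h | h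
  · rw [min_eq_left h, min_eq_left (tsub_le_tsub_right h k)]
  · rw [min_eq_right h, min_eq_right (tsub_le_tsub_right h k)]

theorem add_min' (m n k : ℕ∞) : min m n + k = min (m + k) (n + k) :=
  (min_add_add_right m n k).symm

theorem side' (p Q U v x y Y : ℕ∞) (hy : y ≠ ⊤) (hyq : y ≤ Q) (hyx : y ≤ x) :
    min (min (p - y) (U + x - y) - Y) (min (Q - y) (v + x - y) + x - Y)
    = min (min p (U + x)) (min (Q + x) (v + x + x)) - (y + Y) := by
  rw [add_min' (Q - y) (v + x - y) x, subadd' x hy hyq,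
      subadd' x hy (le_trans hyx le_add_self),
      sub_min' (p - y), sub_min' (Q + x - y), tsub_tsub, tsub_tsub, tsub_tsub, tsub_tsub,
      ← sub_min' p, ← sub_min' (Q + x), ← sub_min']

theorem sum_shuffle' (a b c x : ℕ∞) :
    min (min a (c + x)) (min (min (a + x) (b + x)) (x + x))
    = min (min a (b + x)) (min (c + x) (x + x)) := by
  refine le_antisymm
    (le_min (le_min ?_ ?_) (le_min ?_ ?_))
    (le_min (le_min ?_ ?_) (le_min (le_min ?_ ?_) ?_))
  · exact le_trans (min_le_left _ _) (min_le_left _ _)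
  · exact le_trans (min_le_right _ _) (le_trans (min_le_left _ _) (min_le_right _ _))
  · exact le_trans (min_le_left _ _) (min_le_right _ _)
  · exact le_trans (min_le_right _ _) (min_le_right _ _)
  · exact le_trans (min_le_left _ _) (min_le_left _ _)
  · exact le_trans (min_le_right _ _) (min_le_left _ _)
  · exact le_trans (le_trans (min_le_left _ _) (min_le_left _ _)) le_self_add
  · exact le_trans (min_le_left _ _) (min_le_right _ _)
  · exact le_trans (min_le_right _ _) (min_le_right _ _)

theorem sumlem' (a b c x : ℕ∞) :
    min (min a b) x + min (min (a - min (min a b) x) (c + x - min (min a b) x)) x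
    = min (min a (b + x)) (min (c + x) (x + x)) := by
  set y := min (min a b) x with hy
  have hya : y ≤ a := le_trans (min_le_left _ _) (min_le_left _ _)
  have hyx : y ≤ x := min_le_right _ _
  rw [add_comm, add_min', add_min', tsub_add_cancel_of_le hya,
      tsub_add_cancel_of_le (le_trans hyx le_add_self)]
  have hxy : x + y = min (min (a + x) (b + x)) (x + x) := by
    rw [add_comm x y, hy, add_min', add_min']
  rw [hxy]
  exact sum_shuffle' a b c x

theorem lcond_key (a b c p q u v x : ℕ∞) (hx : x ≠ ⊤)
    (hp : a ≤ p) (hq : b ≤ q) (hu : c ≤ u) :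
    min (min (p - min (min a b) x) (u + x - min (min a b) x)
          - min (min (a - min (min a b) x) (c + x - min (min a b) x)) x)
        (min (q - min (min a b) x) (v + x - min (min a b) x) + x
          - min (min (a - min (min a b) x) (c + x - min (min a b) x)) x)
    = min (min (p - min (min a c) x) (q + x - min (min a c) x)
          - min (min (a - min (min a c) x) (b + x - min (min a c) x)) x)
        (min (u - min (min a c) x) (v + x - min (min a c) x) + x
          - min (min (a - min (min a c) x) (b + x - min (min a c) x)) x) := by
  have hyA : min (min a b) x ≠ ⊤ := ne_top_of_le_ne_top hx (min_le_right _ _)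
  have hyB : min (min a c) x ≠ ⊤ := ne_top_of_le_ne_top hx (min_le_right _ _)
  rw [side' p q u v x _ _ hyA
        (le_trans (le_trans (min_le_left _ _) (min_le_right _ _)) hq) (min_le_right _ _),
      side' p u q v x _ _ hyB
        (le_trans (le_trans (min_le_left _ _) (min_le_right _ _)) hu) (min_le_right _ _),
      min_min_min_comm p (u + x) (q + x) (v + x + x)]
  congr 1
  rw [sumlem' a b c x, sumlem' a c b x, min_min_min_comm a (b + x) (c + x) (x + x)]

/-- L-conditioning is commutative:
((κ_{A↑x})_{B↑x})(C) = ((κ_{B↑x})_{A↑x})(C) for every event C. -/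
theorem lcond_commutative {Ω : Type*} [Fintype Ω] [Nonempty Ω]
    (κ : Ω → ℕ∞) (hκ : (⨅ w, κ w) = 0) (A B : Set Ω)
    (hA : rnk κ A < ⊤) (hAc : rnk κ Aᶜ < ⊤)
    (hB : rnk κ B < ⊤) (hBc : rnk κ Bᶜ < ⊤)
    (x : ℕ∞) (hx : x < ⊤) :
    ∀ C : Set Ω, lcondE (lcondE (rnk κ) A x) B x C = lcondE (lcondE (rnk κ) B x) A x C := by
  intro C
  have rnk_union : ∀ S T : Set Ω, rnk κ (S ∪ T) = min (rnk κ S) (rnk κ T) := by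
    intro S T
    exact iInf_union
  have rnk_mono : ∀ S T : Set Ω, S ⊆ T → rnk κ T ≤ rnk κ S := by
    intro S T h
    exact iInf_le_iInf_of_subset h
  have hAu : (A ∩ B) ∪ (A ∩ Bᶜ) = A := Set.inter_union_compl A B
  have hBu : (A ∩ B) ∪ (Aᶜ ∩ B) = B := by
    ext w; by_cases h : w ∈ A <;> simp [h]
  have hsplitA : rnk κ A = min (rnk κ (A ∩ B)) (rnk κ (A ∩ Bᶜ)) := by
    conv_lhs => rw [← hAu]
    exact rnk_union _ _
  have hsplitB : rnk κ B = min (rnk κ (A ∩ B)) (rnk κ (Aᶜ ∩ B)) := by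
    conv_lhs => rw [← hBu]
    exact rnk_union _ _
  have hp : rnk κ (A ∩ B) ≤ rnk κ (A ∩ (B ∩ C)) :=
    rnk_mono _ _ (fun w hw => ⟨hw.1, hw.2.1⟩)
  have hq : rnk κ (A ∩ Bᶜ) ≤ rnk κ (A ∩ (Bᶜ ∩ C)) :=
    rnk_mono _ _ (fun w hw => ⟨hw.1, hw.2.1⟩)
  have hu : rnk κ (Aᶜ ∩ B) ≤ rnk κ (Aᶜ ∩ (B ∩ C)) :=
    rnk_mono _ _ (fun w hw => ⟨hw.1, hw.2.1⟩)
  simp only [lcondE]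
  rw [Set.inter_left_comm B A C, Set.inter_left_comm Bᶜ A C,
      Set.inter_left_comm B Aᶜ C, Set.inter_left_comm Bᶜ Aᶜ C,
      Set.inter_comm B A, Set.inter_comm Bᶜ A,
      hsplitA, hsplitB]
  exact lcond_key _ _ _ _ _ _ _ x hx.ne hp hq hu
end

section
/- (Semantic content of Theorem 2, first case.) Let κ be a ranking function on Ω, A ⊆ Ω an event with κ(A) < ∞ and κ(Aᶜ) < ∞, and x ∈ ℕ∞ a rank with κ(A) ≤ x. Then the L-conditioning of κ by A with strength x equals the J-conditioning of κ by A with strength x − κ(A) + κ(Aᶜ): for every event B, κ_{A↑x}(B) = κ_{A→(x − κ(A) + κ(Aᶜ))}(B). -/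
/-- when κ(A) ≤ x, L-conditioning by A with strength x equals
J-conditioning by A with strength x − κ(A) + κ(Aᶜ). -/
theorem lcond_eq_jcond_of_rank_le {Ω : Type*} [Fintype Ω] [Nonempty Ω]
    (κ : Ω → ℕ∞) (hκ : (⨅ w, κ w) = 0) (A : Set Ω)
    (hA : rnk κ A < ⊤) (hAc : rnk κ Aᶜ < ⊤) (x : ℕ∞) (hx : rnk κ A ≤ x) :
    ∀ B : Set Ω, lcond κ A x B = jcond κ A (x - rnk κ A + rnk κ Aᶜ) B := by
  intro B
  unfold lcond jcond crank
  rw [min_eq_left hx, Set.inter_comm B A, Set.inter_comm B Aᶜ]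
  congr 1
  have hcr : rnk κ Aᶜ ≤ rnk κ (Aᶜ ∩ B) :=
    le_iInf₂ fun w hw => iInf₂_le w hw.1
  calc rnk κ (Aᶜ ∩ B) + x - rnk κ A
      = rnk κ (Aᶜ ∩ B) + (x - rnk κ A) := (ENat.addLECancellable_of_lt_top hA).add_tsub_assoc_of_le hx _
    _ = (rnk κ (Aᶜ ∩ B) - rnk κ Aᶜ + rnk κ Aᶜ) + (x - rnk κ A) := by
        rw [tsub_add_cancel_of_le hcr]
    _ = rnk κ (Aᶜ ∩ B) - rnk κ Aᶜ + (x - rnk κ A + rnk κ Aᶜ) := by ring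
end

section
/- (Semantic content of Theorem 2, second case.) Let κ be a ranking function on Ω, A ⊆ Ω an event with κ(A) < ∞ and κ(Aᶜ) < ∞, and x ∈ ℕ∞ a rank with x < κ(A). Then the L-conditioning of κ by A with strength x equals the J-conditioning of κ by Aᶜ with strength κ(A) − x: for every event B, κ_{A↑x}(B) = κ_{Aᶜ→(κ(A) − x)}(B). -/
/-- when x < κ(A), L-conditioning by A with strength x equals
J-conditioning by Aᶜ with strength κ(A) − x. -/
theorem lcond_eq_jcond_compl_of_lt_rank {Ω : Type*} [Fintype Ω] [Nonempty Ω]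
    (κ : Ω → ℕ∞) (hκ : (⨅ w, κ w) = 0) (A : Set Ω)
    (hA : rnk κ A < ⊤) (hAc : rnk κ Aᶜ < ⊤) (x : ℕ∞) (hx : x < rnk κ A) :
    ∀ B : Set Ω, lcond κ A x B = jcond κ Aᶜ (rnk κ A - x) B := by
  intro B
  have hxt : x ≠ ⊤ := (hx.trans hA).ne
  have hxa : x ≤ rnk κ A := hx.le
  have hAc0 : rnk κ Aᶜ = 0 := by
    have hmin : min (rnk κ A) (rnk κ Aᶜ) = 0 := by
      rw [← hκ]
      have : (⨅ w, κ w) = ⨅ w ∈ (A ∪ Aᶜ : Set Ω), κ w := by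
        rw [Set.union_compl_self]; simp
      rw [this, iInf_union]
      rfl
    rcases min_eq_iff.mp hmin with h | h
    · exact absurd h.1 (by intro h0; rw [h0] at hx; exact (not_lt_of_ge bot_le) hx)
    · exact h.1
  have hab : rnk κ A ≤ rnk κ (A ∩ B) :=
    le_iInf₂ fun w hw => iInf₂_le w hw.1
  have key : rnk κ (A ∩ B) - rnk κ A + (rnk κ A - x) = rnk κ (A ∩ B) - x :=
    tsub_add_tsub_cancel hab hxa
  simp only [lcond, jcond, crank, compl_compl, min_eq_right hxa,
    Set.inter_comm B, hAc0, tsub_zero, key,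
    (ENat.addLECancellable_of_ne_top hxt).add_tsub_cancel_right]
  rw [min_comm]
end
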